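/- Fix n ≥ 1. Every maximal (for inclusion) adjacency-avoiding subset J of I_n can be written as J = J(B, E) for some complete shifted bipartition (B, E) of {1, …, n}. -/
import Mathlib


/-- `K` is an interval of `{1, …, n}`: a set `⟦i,j⟧ = {i, i+1, …, j}` with `1 ≤ i ≤ j ≤ n`. -/
def IsInterval (n : ℕ) (K : Set ℕ) : Prop :=
  ∃ i j, 1 ≤ i ∧ i ≤ j ∧ j ≤ n ∧ K = Set.Icc i j

/-- The lower bound `b(K)` of an interval `K`. -/
noncomputable def intB (K : Set ℕ) : ℕ := sInf K

/-- The upper bound `e(K)` of an interval `K`. -/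
noncomputable def intE (K : Set ℕ) : ℕ := sSup K

/-- `J(B, E)`: the set of intervals `K` of `{1, …, n}` with `b(K) ∈ B` and `e(K) ∈ E`. -/
def intervalsOf (n : ℕ) (B E : Set ℕ) : Set (Set ℕ) :=
  {K | IsInterval n K ∧ intB K ∈ B ∧ intE K ∈ E}

/-- Two intervals `K`, `L` are adjacent if `b(K) = e(L) + 1` or `b(L) = e(K) + 1`. -/
def Adjacent (K L : Set ℕ) : Prop :=
  intB K = intE L + 1 ∨ intB L = intE K + 1

/-- An interval set is adjacency-avoiding if it contains no pair of adjacent intervals. -/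
def AdjAvoiding (J : Set (Set ℕ)) : Prop :=
  ∀ K ∈ J, ∀ L ∈ J, ¬ Adjacent K L

/-- The shift `A[1] = {a + 1 : a ∈ A}` of a set of integers. -/
def shiftSet (A : Set ℕ) : Set ℕ := (· + 1) '' A

lemma interval_bounds {n : ℕ} {K : Set ℕ} (h : IsInterval n K) :
    1 ≤ intB K ∧ intB K ≤ intE K ∧ intE K ≤ n := by
  obtain ⟨i, j, h1, hij, hjn, rfl⟩ := h
  rw [intB, intE, csInf_Icc hij, csSup_Icc hij]
  exact ⟨h1, hij, hjn⟩

/-- Every maximal (for inclusion) adjacency-avoiding subset `J` of `I_n` is of the form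
`J(B, E)` for some complete shifted bipartition `(B, E)` of `{1, …, n}`. -/
theorem maximal_adjAvoiding_eq_complete_shifted_bipartition (n : ℕ) (hn : 1 ≤ n)
    (J : Set (Set ℕ))
    (hJint : ∀ K ∈ J, IsInterval n K)
    (hJ : AdjAvoiding J)
    (hmax : ∀ K : Set ℕ, IsInterval n K → K ∉ J → ¬ AdjAvoiding (J ∪ {K})) :
    ∃ B E : Set ℕ, B ⊆ Set.Icc 1 n ∧ E ⊆ Set.Icc 1 n ∧
      B ∪ shiftSet E = Set.Icc 1 (n + 1) ∧ B ∩ shiftSet E = ∅ ∧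
      J = intervalsOf n B E := by
  classical
  set B : Set ℕ := {i | ∃ K ∈ J, intB K = i} with hB
  set E : Set ℕ := {j | ∃ K ∈ J, intE K = j} with hE
  have notself : ∀ K : Set ℕ, IsInterval n K → ¬ Adjacent K K := by
    intro K hK
    obtain ⟨h1, hbe, hen⟩ := interval_bounds hK
    rintro (h | h) <;> omega
  -- key extraction lemma
  have key : ∀ K₀ : Set ℕ, IsInterval n K₀ → K₀ ∉ J →
      ∃ L ∈ J, Adjacent K₀ L ∨ Adjacent L K₀ := by
    intro K₀ hint hK₀
    have h := hmax K₀ hint hK₀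
    simp only [AdjAvoiding, not_forall, not_not] at h
    obtain ⟨K, hK, L, hL, hadj⟩ := h
    rcases hK with hK | hK <;> rcases hL with hL | hL
    · exact absurd hadj (hJ K hK L hL)
    · rw [Set.mem_singleton_iff] at hL
      rw [hL] at hadj
      exact ⟨K, hK, Or.inr hadj⟩
    · rw [Set.mem_singleton_iff] at hK
      rw [hK] at hadj
      exact ⟨L, hL, Or.inl hadj⟩
    · rw [Set.mem_singleton_iff] at hK hL
      rw [hK, hL] at hadj
      exact absurd hadj (notself K₀ hint)
  have hdisj : ∀ K ∈ J, ∀ L ∈ J, intB K ≠ intE L + 1 := by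
    intro K hK L hL h
    exact hJ K hK L hL (Or.inl h)
  -- coverage for p ≤ n
  have cover : ∀ p, 1 ≤ p → p ≤ n →
      (∃ K ∈ J, intB K = p) ∨ (∃ K ∈ J, intE K + 1 = p) := by
    intro p h1 hpn
    set K₀ : Set ℕ := Set.Icc p n with hK₀def
    have hint : IsInterval n K₀ := ⟨p, n, h1, hpn, le_refl n, rfl⟩
    have hb : intB K₀ = p := by rw [hK₀def, intB, csInf_Icc hpn]
    have he : intE K₀ = n := by rw [hK₀def, intE, csSup_Icc hpn]
    by_cases hmem : K₀ ∈ J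
    · exact Or.inl ⟨K₀, hmem, hb⟩
    · obtain ⟨L, hL, hadj⟩ := key K₀ hint hmem
      obtain ⟨hL1, hLbe, hLn⟩ := interval_bounds (hJint L hL)
      rcases hadj with (h | h) | (h | h)
      · exact Or.inr ⟨L, hL, by omega⟩
      · rw [he] at h; omega
      · rw [he] at h; omega
      · exact Or.inr ⟨L, hL, by omega⟩
  -- n is an endpoint
  have hnE : ∃ K ∈ J, intE K = n := by
    set K₀ : Set ℕ := Set.Icc 1 n with hK₀def
    have hint : IsInterval n K₀ := ⟨1, n, le_refl 1, hn, le_refl n, rfl⟩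
    have hb : intB K₀ = 1 := by rw [hK₀def, intB, csInf_Icc hn]
    have he : intE K₀ = n := by rw [hK₀def, intE, csSup_Icc hn]
    by_cases hmem : K₀ ∈ J
    · exact ⟨K₀, hmem, he⟩
    · obtain ⟨L, hL, hadj⟩ := key K₀ hint hmem
      obtain ⟨hL1, hLbe, hLn⟩ := interval_bounds (hJint L hL)
      exfalso
      rcases hadj with (h | h) | (h | h) <;> rw [hb] at * <;> omega
  refine ⟨B, E, ?_, ?_, ?_, ?_, ?_⟩
  · rintro i ⟨K, hK, rfl⟩
    obtain ⟨h1, hbe, hen⟩ := interval_bounds (hJint K hK)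
    exact Set.mem_Icc.mpr ⟨h1, by omega⟩
  · rintro j ⟨K, hK, rfl⟩
    obtain ⟨h1, hbe, hen⟩ := interval_bounds (hJint K hK)
    exact Set.mem_Icc.mpr ⟨by omega, hen⟩
  · ext p
    simp only [Set.mem_union, Set.mem_Icc, shiftSet, Set.mem_image, hB, hE,
      Set.mem_setOf_eq]
    constructor
    · rintro (⟨K, hK, rfl⟩ | ⟨j, ⟨K, hK, rfl⟩, rfl⟩) <;>
        obtain ⟨h1, hbe, hen⟩ := interval_bounds (hJint K hK) <;>
        constructor <;> omega
    · rintro ⟨h1, hpn1⟩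
      by_cases hpn : p ≤ n
      · rcases cover p h1 hpn with ⟨K, hK, hb⟩ | ⟨K, hK, he⟩
        · exact Or.inl ⟨K, hK, hb⟩
        · exact Or.inr ⟨intE K, ⟨K, hK, rfl⟩, he⟩
      · have hp : p = n + 1 := by omega
        obtain ⟨K, hK, he⟩ := hnE
        exact Or.inr ⟨intE K, ⟨K, hK, rfl⟩, by omega⟩
  · ext p
    simp only [Set.mem_inter_iff, Set.mem_empty_iff_false, iff_false, shiftSet,
      Set.mem_image, hB, hE, Set.mem_setOf_eq, not_and]
    rintro ⟨K, hK, rfl⟩ ⟨j, ⟨L, hL, rfl⟩, hj⟩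
    exact hdisj K hK L hL hj.symm
  · ext K
    simp only [intervalsOf, Set.mem_setOf_eq, hB, hE]
    constructor
    · intro hK
      exact ⟨hJint K hK, ⟨K, hK, rfl⟩, ⟨K, hK, rfl⟩⟩
    · rintro ⟨hint, ⟨K', hK', hb'⟩, ⟨L', hL', he'⟩⟩
      by_contra hK
      obtain ⟨L, hL, hadj⟩ := key K hint hK
      rcases hadj with (h | h) | (h | h)
      · exact hdisj K' hK' L hL (by omega)
      · exact hdisj L hL L' hL' (by omega)
      · exact hdisj L hL L' hL' (by omega)
      · exact hdisj K' hK' L hL (by omega)
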